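/- The modified Bessel function of the first kind of order 0, I_0(t) = ∑_{k=0}^∞ (t/2)^{2k}/(k!)^2, satisfies I_0(t)^2 ≤ 2 exp(√(1+4 t²) − 1) / (√(1+4 t²) + 1) for all t ≥ 0. -/

import Mathlib

open Finset Nat


lemma L1 (n : ℕ) : Nat.centralBinom n ^ 2 * (3*n+1) ≤ 16 ^ n := by
  induction n with
  | zero => simp [Nat.centralBinom]
  | succ n ih =>
    have h := Nat.succ_mul_centralBinom_succ n
    set c := Nat.centralBinom n with hc
    set C := Nat.centralBinom (n+1) with hC
    have key : ((n+1) * C)^2 * ((3*(n+1)+1) * (3*n+1)) ≤ (n+1)^2 * (3*n+1) * 16^(n+1) := by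
      rw [h]
      calc (2*(2*n+1)*c)^2 * ((3*(n+1)+1) * (3*n+1))
          = (4*(2*n+1)^2*(3*n+4)) * (c^2*(3*n+1)) := by ring
        _ ≤ (4*(2*n+1)^2*(3*n+4)) * 16^n := Nat.mul_le_mul_left _ ih
        _ ≤ (16*(n+1)^2*(3*n+1)) * 16^n := by
            have : 4*(2*n+1)^2*(3*n+4) ≤ 16*(n+1)^2*(3*n+1) := by nlinarith
            exact Nat.mul_le_mul_right _ this
        _ = (n+1)^2 * (3*n+1) * 16^(n+1) := by ring
    have hpos : 0 < (n+1)^2 * (3*n+1) := by positivity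
    have : (n+1)^2 * (3*n+1) * (C^2 * (3*(n+1)+1)) ≤ (n+1)^2 * (3*n+1) * 16^(n+1) := by
      calc (n+1)^2 * (3*n+1) * (C^2 * (3*(n+1)+1)) = ((n+1) * C)^2 * ((3*(n+1)+1) * (3*n+1)) := by ring
        _ ≤ _ := key
    exact Nat.le_of_mul_le_mul_left this hpos

lemma Lodd (p : ℕ) : (p+1) * (2*p+1).choose p = (2*p+1) * Nat.centralBinom p := by
  have h1 : (2*p+1).succ * (2*p+1).choose p = (2*p+1).succ.choose p.succ * p.succ := Nat.add_one_mul_choose_eq (2*p+1) p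
  have h2 := Nat.succ_mul_centralBinom_succ p
  have h3 : (2*p+1).succ.choose p.succ = Nat.centralBinom (p+1) := by
    rw [Nat.centralBinom_eq_two_mul_choose]
    congr 1 <;> omega
  rw [h3] at h1
  have h4 : 2*((p+1) * (2*p+1).choose p) = 2*((2*p+1) * Nat.centralBinom p) := by
    calc 2*((p+1) * (2*p+1).choose p) = (2*p+1).succ * (2*p+1).choose p := by
          simp [Nat.succ_eq_add_one]; ring
      _ = Nat.centralBinom (p+1) * (p+1) := h1
      _ = (p+1) * Nat.centralBinom (p+1) := by ring
      _ = 2 * (2*p+1) * Nat.centralBinom p := h2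
      _ = 2*((2*p+1) * Nat.centralBinom p) := by ring
  omega

lemma L2 (m r : ℕ) : (m.choose r)^2 * (3*m+2) ≤ 2 * 4^m := by
  have hmid := Nat.choose_le_middle r m
  have key : (m.choose (m/2))^2 * (3*m+2) ≤ 2 * 4^m := by
    rcases Nat.even_or_odd m with ⟨p, rfl⟩ | ⟨p, rfl⟩
    · have h5 : (p+p)/2 = p := by omega
      rw [h5]
      have h6 : (p+p).choose p = Nat.centralBinom p := by
        rw [Nat.centralBinom_eq_two_mul_choose]; congr 1; omega
      rw [h6]
      have h1 := L1 p
      have h16 : (4:ℕ)^(p+p) = 16^p := by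
        rw [show p+p = 2*p from by omega, pow_mul]; norm_num
      calc Nat.centralBinom p ^2 * (3*(p+p)+2) = 2*(Nat.centralBinom p^2 * (3*p+1)) := by ring
        _ ≤ 2 * 16^p := by omega
        _ = 2 * 4^(p+p) := by rw [h16]
    · have h2 : (2*p+1)/2 = p := by omega
      rw [h2]
      have h1 := L1 p
      have hid := Lodd p
      have h16 : (4:ℕ)^(2*p+1) = 4*16^p := by
        rw [pow_succ, pow_mul]; norm_num; ring
      have hpos : 0 < (p+1)^2 * (3*p+1) := by positivity
      have hcancel : (p+1)^2 * (3*p+1) * ((2*p+1).choose p ^2 * (3*(2*p+1)+2)) ≤ (p+1)^2 * (3*p+1) * (2 * 4^(2*p+1)) := by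
        have e1 : (p+1)^2 * (3*p+1) * ((2*p+1).choose p ^2 * (3*(2*p+1)+2))
            = ((p+1) * (2*p+1).choose p)^2 * ((6*p+5) * (3*p+1)) := by ring
        rw [e1, hid, h16]
        calc ((2*p+1) * Nat.centralBinom p)^2 * ((6*p+5)*(3*p+1))
            = ((2*p+1)^2*(6*p+5)) * (Nat.centralBinom p^2 * (3*p+1)) := by ring
          _ ≤ ((2*p+1)^2*(6*p+5)) * 16^p := Nat.mul_le_mul_left _ h1
          _ ≤ (8*(p+1)^2*(3*p+1)) * 16^p := by
              have : (2*p+1)^2*(6*p+5) ≤ 8*(p+1)^2*(3*p+1) := by nlinarith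
              exact Nat.mul_le_mul_right _ this
          _ = (p+1)^2*(3*p+1) * (2 * (4*16^p)) := by ring
      exact Nat.le_of_mul_le_mul_left hcancel hpos
  calc (m.choose r)^2 * (3*m+2) ≤ (m.choose (m/2))^2 * (3*m+2) :=
        Nat.mul_le_mul_right _ (Nat.pow_le_pow_left hmid 2)
    _ ≤ 2 * 4^m := key

lemma L3 (k : ℕ) (hk : 3 ≤ k) : 2 * 2^k ≤ (Nat.factorial k)^2 := by
  induction k with
  | zero => omega
  | succ k ih =>
    rcases Nat.lt_or_ge k 3 with h | h
    · interval_cases k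
      · omega
      · omega
      · simp [Nat.factorial]
    · have := ih h
      have h2 : 2 ≤ (k+1)^2 := by nlinarith
      calc 2 * 2^(k+1) = 2 * (2*2^k) := by ring
        _ ≤ 2 * (Nat.factorial k)^2 := by omega
        _ ≤ (k+1)^2 * (Nat.factorial k)^2 := Nat.mul_le_mul_right _ h2
        _ = ((k+1) * Nat.factorial k)^2 := by ring
        _ = ((Nat.factorial (k+1)))^2 := by rw [Nat.factorial_succ]

lemma cb_fac (n : ℕ) : (2*n)! = Nat.centralBinom n * (n ! * n !) := by
  have h := Nat.choose_mul_factorial_mul_factorial (show n ≤ 2*n by omega)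
  rw [Nat.centralBinom_eq_two_mul_choose]
  have h2 : 2*n - n = n := by omega
  rw [h2] at h
  rw [← h]; ring

lemma key (n j : ℕ) (hj : j ≤ n + 1) (h0 : 1 ≤ n ∨ 1 ≤ j) :
    (2*n).choose n * ((n+1).choose j) * 2^(n+1-j) * 2^((n+1-j)/2) * (n+j)!
      ≤ 16^n * (n !)^2 := by
  have hcb : (2*n).choose n = Nat.centralBinom n := (Nat.centralBinom_eq_two_mul_choose n).symm
  rw [hcb]
  set c := Nat.centralBinom n with hc
  have hcf : (2*n)! = c * (n ! * n !) := cb_fac n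
  have hL1 : c^2 * (3*n+1) ≤ 16^n := L1 n
  rcases Nat.lt_or_ge (n+1-j) 3 with hk | hk
  · have h3 : j = n+1 ∨ (j = n ∧ 1 ≤ n) ∨ (j+1 = n ∧ 1 ≤ n) := by omega
    rcases h3 with h2 | ⟨h2, hn⟩ | ⟨h2, hn⟩
    · -- k = 0
      subst h2
      simp only [Nat.sub_self, pow_zero, Nat.zero_div, mul_one, Nat.choose_self]
      have hfac : (n+(n+1))! = (2*n+1) * (2*n)! := by
        rw [show n+(n+1) = 2*n+1 from by omega, Nat.factorial_succ]
      rw [hfac, hcf]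
      calc c * ((2*n+1) * (c * (n ! * n !)))
          = (c^2*(2*n+1)) * (n !^2) := by ring
        _ ≤ 16^n * (n !)^2 := by
            apply Nat.mul_le_mul_right
            calc c^2*(2*n+1) ≤ c^2*(3*n+1) := Nat.mul_le_mul_left _ (by omega)
              _ ≤ 16^n := hL1
    · -- k = 1
      subst h2
      have e1 : j+1-j = 1 := by omega
      rw [e1]
      simp only [pow_one, Nat.choose_succ_self_right]
      rw [show (1:ℕ)/2 = 0 from rfl, pow_zero, show j+j = 2*j from by omega, hcf]
      calc c * (j+1) * 2 * 1 * (c * (j ! * j !))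
          = (c^2*(2*(j+1))) * (j !^2) := by ring
        _ ≤ 16^j * (j !)^2 := by
            apply Nat.mul_le_mul_right
            calc c^2*(2*(j+1)) ≤ c^2*(3*j+1) := Nat.mul_le_mul_left _ (by omega)
              _ ≤ 16^j := hL1
    · -- k = 2, n = j+1
      have e1 : n+1-j = 2 := by omega
      rw [e1]
      norm_num
      -- B := (n+1).choose j
      have hB2 : (n+1).choose j * 2 = (n+1) * n := by
        have hsymm : (n+1).choose j = (n+1).choose 2 := by
          rw [← Nat.choose_symm (show 2 ≤ n+1 by omega)]
          congr 1; omega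
        have h := Nat.choose_mul_factorial_mul_factorial (show 2 ≤ n+1 by omega)
        have h2 : (n+1) - 2 = j := by omega
        rw [h2] at h
        have h3 : (n+1)! = (n+1)*n*(j !) := by
          conv_lhs => rw [show n+1 = j+1+1 from by omega]
          rw [Nat.factorial_succ, Nat.factorial_succ]
          have : j+1+1 = n+1 := by omega
          rw [this, show j+1 = n from by omega]
          ring
        have h5 : (n+1).choose 2 * 2 * (j !) = (n+1)*n*(j !) := by
          calc (n+1).choose 2 * 2 * (j !) = (n+1).choose 2 * 2! * (j !) := by norm_num [Nat.factorial]
            _ = (n+1)! := h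
            _ = (n+1)*n*(j !) := h3
        have := Nat.eq_of_mul_eq_mul_right (Nat.factorial_pos j) h5
        rw [hsymm, this]
      -- multiply by 2n
      have hpos : 0 < 2*n := by omega
      apply Nat.le_of_mul_le_mul_left (a := _) (b := _) ?_ hpos
      have hfac : 2*n * (n+j)! = (2*n)! := by
        rw [show n+j = 2*n-1 from by omega]
        rw [show 2*n = (2*n-1)+1 from by omega, Nat.factorial_succ]
        congr 2 <;> omega
      calc 2*n * (c * (n+1).choose j * 4 * 2 * (n+j)!)
          = ((n+1).choose j * 2) * 4 * c * (2*n*(n+j)!) := by ring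
        _ = ((n+1)*n) * 4 * c * (2*n)! := by rw [hB2, hfac]
        _ = (c^2 * (2*(n+1))) * (2*n) * (n !^2) := by rw [hcf]; ring
        _ ≤ (16^n) * (2*n) * (n !^2) := by
            apply Nat.mul_le_mul_right
            apply Nat.mul_le_mul_right
            calc c^2*(2*(n+1)) ≤ c^2*(3*n+1) := Nat.mul_le_mul_left _ (by omega)
              _ ≤ 16^n := hL1
        _ = 2*n*(16^n * (n !)^2) := by ring
  · -- k ≥ 3
    set k := n+1-j with hkdef
    have hjk : j + k = n+1 := by omega
    have hn2 : 2 ≤ n := by omega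
    set m := n + j with hm
    set e := k/2 with he
    -- squared comparison
    have hX2 : (c * ((n+1).choose j) * 2^k * 2^e * m !)^2 ≤ (16^n * (n !)^2)^2 := by
      have F1 : (n+1).choose j * j ! * k ! = (n+1)! := by
        have h := Nat.choose_mul_factorial_mul_factorial (show j ≤ n+1 by omega)
        rwa [show n+1-j = k from rfl] at h
      have F2 : m.choose n * n ! * j ! = m ! := by
        have h := Nat.choose_mul_factorial_mul_factorial (show n ≤ m by omega)
        rwa [show m - n = j from by omega] at h
      have F5 : (m.choose n)^2 * (3*m+2) ≤ 2 * 4^m := L2 m n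
      have F6 : 2 * 4^e ≤ (k !)^2 := by
        calc 2 * 4^e = 2 * 2^(2*e) := by rw [pow_mul]; norm_num
          _ ≤ 2 * 2^k := by
              apply Nat.mul_le_mul_left
              exact Nat.pow_le_pow_right (by omega) (by omega)
          _ ≤ (k !)^2 := L3 k hk
      have hmn : n ≤ m := by omega
      have F7 : 4*(n+1)^2 ≤ (3*n+1)*(3*m+2) := by nlinarith [hmn, hn2]
      have hk4 : ((2:ℕ)^k)^2 = 4^k := by
        rw [← pow_mul, mul_comm, pow_mul]; norm_num
      have he4 : ((2:ℕ)^e)^2 = 4^e := by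
        rw [← pow_mul, mul_comm, pow_mul]; norm_num
      have hpow : (4:ℕ)^m * 4^k = 4 * 16^n := by
        rw [← pow_add, show m+k = 2*n+1 from by omega, pow_succ, pow_mul]
        norm_num; ring
      have hpos : 0 < (k !)^2 * ((3*n+1)*(3*m+2)) := by positivity
      apply Nat.le_of_mul_le_mul_right ?_ hpos
      calc (c * ((n+1).choose j) * 2^k * 2^e * m !)^2 * ((k !)^2 * ((3*n+1)*(3*m+2)))
          = ((c^2*(3*n+1)) * ((m.choose n)^2*(3*m+2))) * (((n+1)!)^2 * (((2:ℕ)^k)^2*((2:ℕ)^e)^2) * (n !)^2) := by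
            rw [← F1, ← F2]; ring
        _ ≤ ((16^n) * (2*4^m)) * (((n+1)!)^2 * (((2:ℕ)^k)^2*((2:ℕ)^e)^2) * (n !)^2) := by
            apply Nat.mul_le_mul_right
            exact Nat.mul_le_mul hL1 F5
        _ = (16^n) * (4^m*4^k) * ((n !)^4 * (2*4^e) * (n+1)^2) := by
            rw [hk4, he4, Nat.factorial_succ]; ring
        _ = (16^n) * (4*16^n) * ((n !)^4 * (2*4^e) * (n+1)^2) := by rw [hpow]
        _ = (16^n*16^n) * (n !)^4 * ((2*4^e) * (4*(n+1)^2)) := by ring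
        _ ≤ (16^n*16^n) * (n !)^4 * ((k !)^2 * ((3*n+1)*(3*m+2))) := by
            apply Nat.mul_le_mul_left
            exact Nat.mul_le_mul F6 F7
        _ = (16^n * (n !)^2)^2 * ((k !)^2 * ((3*n+1)*(3*m+2))) := by ring
    exact (Nat.pow_le_pow_iff_left (by norm_num)).mp hX2

noncomputable def lam (n j : ℕ) : ℝ := if n = 0 ∧ j = 0 then 1 else (2:ℝ)⁻¹^((n+1-j)/2 + 1)

lemma lam_nonneg (n j : ℕ) : 0 ≤ lam n j := by
  unfold lam; split <;> positivity

lemma regroup (g : ℕ×ℕ → ENNReal) : ∑' p, g p = ∑' n, ∑ p ∈ antidiagonal n, g p := by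
  rw [← Equiv.tsum_eq (Finset.HasAntidiagonal.sigmaAntidiagonalEquivProd (A := ℕ)) g]
  rw [ENNReal.tsum_sigma']
  congr 1
  funext n
  exact Finset.tsum_subtype _ _

lemma exp_tsum (u : ℝ) : Real.exp u = ∑' n : ℕ, u^n / n ! := by
  rw [Real.exp_eq_exp_ℝ, NormedSpace.exp_eq_tsum_div]

lemma exp_sum_en (u : ℝ) (hu : 0 ≤ u) : (∑' m : ℕ, ENNReal.ofReal (2*u^m/(m !))) = ENNReal.ofReal (2 * Real.exp u) := by
  have hs : Summable (fun m : ℕ => 2*u^m/(m ! : ℝ)) := by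
    simpa [mul_div_assoc] using (Real.summable_pow_div_factorial u).mul_left 2
  rw [← ENNReal.ofReal_tsum_of_nonneg (fun m => by positivity) hs]
  congr 1
  simp_rw [mul_div_assoc]
  rw [tsum_mul_left, exp_tsum]

lemma fiber_bound (m : ℕ) : ∑ p ∈ antidiagonal m, (if p.2 ≤ p.1 + 1 then ENNReal.ofReal (lam p.1 p.2) else 0) ≤ 1 := by
  rcases Nat.eq_zero_or_pos m with rfl | hm
  · simp [lam]
  · have hstep : ∀ p ∈ antidiagonal m, (if p.2 ≤ p.1 + 1 then ENNReal.ofReal (lam p.1 p.2) else 0)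
        ≤ (if p.2 ≤ p.1 + 1 then (2:ENNReal)⁻¹^((p.1+1-p.2)/2 + 1) else 0) := by
      rintro ⟨n, j⟩ hp
      rw [Finset.HasAntidiagonal.mem_antidiagonal] at hp
      dsimp only
      split
      · have hn0 : ¬(n = 0 ∧ j = 0) := by omega
        rw [lam, if_neg hn0]
        rw [ENNReal.ofReal_pow (by norm_num)]
        apply pow_le_pow_left' (le_of_eq ?_)
        rw [ENNReal.ofReal_inv_of_pos (by norm_num)]
        norm_num
      · exact le_rfl
    refine le_trans (Finset.sum_le_sum hstep) ?_
    rw [← Finset.sum_filter]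
    have hinj : ∀ p ∈ (antidiagonal m).filter (fun p : ℕ×ℕ => p.2 ≤ p.1 + 1),
        ∀ q ∈ (antidiagonal m).filter (fun p : ℕ×ℕ => p.2 ≤ p.1 + 1),
        (fun p : ℕ×ℕ => (p.1+1-p.2)/2) p = (fun p : ℕ×ℕ => (p.1+1-p.2)/2) q → p = q := by
      rintro ⟨n, j⟩ hp ⟨n', j'⟩ hq hfeq
      simp only [Finset.mem_filter, Finset.HasAntidiagonal.mem_antidiagonal] at hp hq
      simp only at hfeq
      have h1 : n = n' := by omega
      have h2 : j = j' := by omega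
      simp [h1, h2]
    have himg := Finset.sum_image (f := fun i => (2:ENNReal)⁻¹^(i+1)) hinj
    refine le_trans (le_of_eq himg.symm) (le_trans (ENNReal.sum_le_tsum _) ?_)
    rw [ENNReal.tsum_geometric_add_one, ENNReal.one_sub_inv_two]
    simp

noncomputable def An (n : ℕ) : ℝ := ∑ p ∈ antidiagonal n, 1/((p.1 ! : ℝ)^2*(p.2 ! : ℝ)^2)

lemma An_nonneg (n : ℕ) : 0 ≤ An n := by
  apply Finset.sum_nonneg; intro p _; positivity

lemma An_eq (n : ℕ) : An n = ((2*n).choose n : ℝ) / ((n ! : ℝ))^2 := by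
  rw [eq_div_iff (by positivity)]
  unfold An
  rw [Finset.sum_mul]
  rw [Finset.sum_congr rfl (g := fun p : ℕ×ℕ => ((n.choose p.1 : ℝ) * (n.choose p.2 : ℝ))) ?_]
  · have hv := Nat.add_choose_eq n n n
    rw [show n+n = 2*n from by omega] at hv
    rw [hv]
    push_cast
    rfl
  · rintro ⟨i, j⟩ hp
    rw [Finset.HasAntidiagonal.mem_antidiagonal] at hp
    simp only
    have hi : i ≤ n := by omega
    have hj : j ≤ n := by omega
    rw [Nat.cast_choose ℝ hi, Nat.cast_choose ℝ hj]
    rw [show n - i = j from by omega, show n - j = i from by omega]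
    have h1 : (i ! : ℝ) ≠ 0 := by positivity
    have h2 : (j ! : ℝ) ≠ 0 := by positivity
    field_simp

lemma perterm (n j : ℕ) (hj : j ≤ n+1) :
    An n * ((n+1).choose j) * 2^(n+1-j) / 16^n ≤ lam n j * 2 / ((n+j)! : ℝ) := by
  rw [An_eq]
  by_cases h00 : n = 0 ∧ j = 0
  · obtain ⟨rfl, rfl⟩ := h00
    norm_num [lam]
  · rw [lam, if_neg h00]
    have hkey := key n j hj (by omega)
    have hkeyR : ((2*n).choose n : ℝ) * ((n+1).choose j) * 2^(n+1-j) * 2^((n+1-j)/2) * ((n+j)! : ℝ)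
        ≤ 16^n * ((n !  : ℝ))^2 := by exact_mod_cast hkey
    have hlam2 : (2:ℝ)⁻¹^((n+1-j)/2+1) * 2 / ((n+j)! : ℝ) = 1 / (2^((n+1-j)/2) * ((n+j)! : ℝ)) := by
      rw [pow_succ, inv_pow]
      field_simp
    rw [hlam2]
    rw [div_mul_eq_mul_div, div_mul_eq_mul_div, div_div]
    rw [div_le_div_iff₀ (by positivity) (by positivity)]
    calc ((2*n).choose n : ℝ) * ((n+1).choose j) * 2^(n+1-j) * (2^((n+1-j)/2) * ((n+j)! : ℝ))
        = ((2*n).choose n : ℝ) * ((n+1).choose j) * 2^(n+1-j) * 2^((n+1-j)/2) * ((n+j)! : ℝ) := by ring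
      _ ≤ 16^n * ((n ! : ℝ))^2 := hkeyR
      _ = 1 * (((n ! : ℝ))^2 * 16^n) := by ring

lemma tsum_sq (f : ℕ → ENNReal) : (∑' i, f i)^2 = ∑' p : ℕ×ℕ, f p.1 * f p.2 := by
  rw [sq, ← ENNReal.tsum_mul_right]
  simp_rw [← ENNReal.tsum_mul_left]
  rw [← ENNReal.tsum_prod]

lemma stepA (x : ℝ) (hx : 0 ≤ x) (n : ℕ) :
    ∑ p ∈ antidiagonal n, (ENNReal.ofReal (x^p.1/((p.1)! : ℝ)^2) * ENNReal.ofReal (x^p.2/((p.2)! : ℝ)^2))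
      = ENNReal.ofReal (An n * x^n) := by
  have h1 : An n * x^n = ∑ p ∈ antidiagonal n, x^n * (1/((p.1 ! : ℝ)^2*(p.2 ! : ℝ)^2)) := by
    rw [An, Finset.sum_mul]
    exact Finset.sum_congr rfl (fun p _ => by ring)
  rw [h1, ENNReal.ofReal_sum_of_nonneg (fun p _ => by positivity)]
  apply Finset.sum_congr rfl
  rintro ⟨i, j⟩ hp
  rw [Finset.HasAntidiagonal.mem_antidiagonal] at hp
  simp only
  rw [← ENNReal.ofReal_mul (by positivity)]
  congr 1
  rw [← hp, pow_add]
  field_simp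

lemma stepB (u A x : ℝ) (hu : 0 ≤ u) (hA : 0 ≤ A) (hxu : x*16 = u*(u+2)) (n : ℕ) :
    ENNReal.ofReal ((u+2) * (A * x^n)) =
      ∑ j ∈ range (n+2), ENNReal.ofReal (A * ((n+1).choose j) * 2^(n+1-j) * u^(n+j) / 16^n) := by
  have h1 : x^n * 16^n = u^n*(u+2)^n := by
    calc x^n * 16^n = (x*16)^n := (mul_pow x 16 n).symm
      _ = (u*(u+2))^n := by rw [hxu]
      _ = u^n*(u+2)^n := mul_pow u (u+2) n
  have h3 := add_pow u 2 (n+1)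
  have h2 : (u+2)*(A*x^n) = ∑ j ∈ range (n+2), A * ((n+1).choose j) * 2^(n+1-j) * u^(n+j) / 16^n := by
    have h16 : (16:ℝ)^n ≠ 0 := by positivity
    calc (u+2)*(A*x^n)
        = A * u^n * (u+2)^(n+1) / 16^n := by
          rw [eq_div_iff h16]
          linear_combination (A*(u+2)) * h1
      _ = ∑ j ∈ range (n+2), A * ((n+1).choose j) * 2^(n+1-j) * u^(n+j)/16^n := by
          rw [h3, Finset.mul_sum, Finset.sum_div]
          apply Finset.sum_congr rfl
          intro j hj
          rw [pow_add]
          ring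
  rw [h2, ENNReal.ofReal_sum_of_nonneg (fun j _ => by positivity)]

theorem stmt_6 (t : ℝ) (ht : 0 ≤ t) :
    (∑' k : ℕ, (t / 2) ^ (2 * k) / ((Nat.factorial k : ℝ)) ^ 2) ^ 2 ≤
      2 * Real.exp (Real.sqrt (1 + 4 * t ^ 2) - 1) / (Real.sqrt (1 + 4 * t ^ 2) + 1) := by
  set s := Real.sqrt (1 + 4*t^2) with hsdef
  have hsq : s^2 = 1 + 4*t^2 := Real.sq_sqrt (by positivity)
  have hs1 : 1 ≤ s := by
    have h01 : (1:ℝ) ≤ 1 + 4*t^2 := by nlinarith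
    calc (1:ℝ) = Real.sqrt 1 := Real.sqrt_one.symm
      _ ≤ s := Real.sqrt_le_sqrt h01
  set u := s - 1 with hudef
  have hu : 0 ≤ u := by rw [hudef]; linarith
  have hu2 : u + 2 = s + 1 := by rw [hudef]; ring
  set x := (t/2)^2 with hxdef
  have hx : 0 ≤ x := by positivity
  have hxu : x*16 = u*(u+2) := by rw [hudef, hxdef]; linear_combination -hsq
  -- rewrite summand
  have hre : (fun k : ℕ => (t/2)^(2*k)/((Nat.factorial k : ℝ))^2) = fun k => x^k/((k ! : ℝ))^2 := by
    funext k; rw [hxdef, ← pow_mul]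
  rw [hre]
  set L := ∑' k : ℕ, x^k/((k ! : ℝ))^2 with hLdef
  have hterm : ∀ k : ℕ, 0 ≤ x^k/((k ! : ℝ))^2 := fun k => by positivity
  have hL0 : 0 ≤ L := tsum_nonneg hterm
  have hsum : Summable (fun k : ℕ => x^k/((k ! : ℝ))^2) := by
    refine Summable.of_nonneg_of_le hterm (fun k => ?_) (Real.summable_pow_div_factorial x)
    have h1 : (1:ℝ) ≤ (k ! : ℝ) := by exact_mod_cast Nat.one_le_iff_ne_zero.mpr (Nat.factorial_ne_zero k)
    have h2 : (k ! : ℝ) ≤ ((k ! : ℝ))^2 := by nlinarith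
    apply div_le_div_of_nonneg_left (by positivity) (by positivity) h2
  -- main ENNReal chain
  have main : ENNReal.ofReal ((u+2) * L^2) ≤ ENNReal.ofReal (2 * Real.exp u) := by
    have hofL : ENNReal.ofReal L = ∑' k : ℕ, ENNReal.ofReal (x^k/((k ! : ℝ))^2) :=
      ENNReal.ofReal_tsum_of_nonneg hterm hsum
    set F : ℕ×ℕ → ENNReal := fun p => if p.2 ≤ p.1 + 1 then ENNReal.ofReal (lam p.1 p.2) * ENNReal.ofReal (2*u^(p.1+p.2)/(((p.1+p.2)! : ℝ))) else 0 with hF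
    calc ENNReal.ofReal ((u+2) * L^2)
        = ENNReal.ofReal (u+2) * (ENNReal.ofReal L)^2 := by
          rw [ENNReal.ofReal_mul (by linarith), ENNReal.ofReal_pow hL0]
      _ = ENNReal.ofReal (u+2) * ∑' p : ℕ×ℕ, (ENNReal.ofReal (x^p.1/((p.1 ! : ℝ))^2) * ENNReal.ofReal (x^p.2/((p.2 ! : ℝ))^2)) := by
          rw [hofL, tsum_sq]
      _ = ENNReal.ofReal (u+2) * ∑' n : ℕ, ENNReal.ofReal (An n * x^n) := by
          rw [regroup]
          congr 1
          exact tsum_congr (fun n => stepA x hx n)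
      _ = ∑' n : ℕ, ENNReal.ofReal ((u+2) * (An n * x^n)) := by
          rw [← ENNReal.tsum_mul_left]
          exact tsum_congr (fun n => (ENNReal.ofReal_mul (by linarith)).symm)
      _ = ∑' n : ℕ, ∑ j ∈ range (n+2), ENNReal.ofReal (An n * ((n+1).choose j) * 2^(n+1-j) * u^(n+j) / 16^n) :=
          tsum_congr (fun n => stepB u (An n) x hu (An_nonneg n) hxu n)
      _ ≤ ∑' n : ℕ, ∑ j ∈ range (n+2), (ENNReal.ofReal (lam n j) * ENNReal.ofReal (2*u^(n+j)/(((n+j)! : ℝ)))) := by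
          apply ENNReal.tsum_le_tsum
          intro n
          apply Finset.sum_le_sum
          intro j hj
          rw [Finset.mem_range] at hj
          rw [← ENNReal.ofReal_mul (lam_nonneg n j)]
          apply ENNReal.ofReal_le_ofReal
          have hpt := perterm n j (by omega)
          have hmul := mul_le_mul_of_nonneg_right hpt (pow_nonneg hu (n+j))
          calc An n * ((n+1).choose j) * 2^(n+1-j) * u^(n+j) / 16^n
              = (An n * ((n+1).choose j) * 2^(n+1-j) / 16^n) * u^(n+j) := by ring
            _ ≤ (lam n j * 2 / (((n+j)! : ℝ))) * u^(n+j) := hmul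
            _ = lam n j * (2*u^(n+j)/(((n+j)! : ℝ))) := by ring
      _ = ∑' n : ℕ, ∑' j : ℕ, F (n, j) := by
          apply tsum_congr
          intro n
          rw [tsum_eq_sum (s := range (n+2)) ?_]
          · apply Finset.sum_congr rfl
            intro j hj
            rw [Finset.mem_range] at hj
            rw [hF]
            simp only
            rw [if_pos (show j ≤ n + 1 by omega)]
          · intro j hj
            rw [Finset.mem_range] at hj
            rw [hF]
            simp only
            rw [if_neg (show ¬ (j ≤ n + 1) by omega)]
      _ = ∑' p : ℕ×ℕ, F p := (ENNReal.tsum_prod').symm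
      _ = ∑' m : ℕ, ∑ p ∈ antidiagonal m, F p := regroup F
      _ ≤ ∑' m : ℕ, ENNReal.ofReal (2*u^m/((m ! : ℝ))) := by
          apply ENNReal.tsum_le_tsum
          intro m
          have hsplit : ∀ p ∈ antidiagonal m, F p
              = (if p.2 ≤ p.1 + 1 then ENNReal.ofReal (lam p.1 p.2) else 0) * ENNReal.ofReal (2*u^m/((m ! : ℝ))) := by
            rintro ⟨n, j⟩ hp
            rw [Finset.HasAntidiagonal.mem_antidiagonal] at hp
            rw [hF]
            simp only
            rw [hp]
            split
            · rfl
            · rw [zero_mul]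
          rw [Finset.sum_congr rfl hsplit, ← Finset.sum_mul]
          calc _ ≤ 1 * ENNReal.ofReal (2*u^m/((m ! : ℝ))) := _root_.mul_le_mul_left (fiber_bound m) _
            _ = _ := one_mul _
      _ = ENNReal.ofReal (2 * Real.exp u) := exp_sum_en u hu
  have hfin : (u+2) * L^2 ≤ 2 * Real.exp u := by
    have h2e : 0 ≤ 2 * Real.exp u := by positivity
    exact (ENNReal.ofReal_le_ofReal_iff h2e).mp main
  rw [le_div_iff₀ (by linarith : (0:ℝ) < s + 1)]
  calc L^2 * (s+1) = (u+2) * L^2 := by rw [hu2]; ring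
    _ ≤ 2 * Real.exp u := hfin
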